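/- Let M(n) be a positive semidefinite, recursively generated moment matrix with column relation YX = 0. Then every nonzero column of M(n) equals a column indexed by a monomial in {1, x, y, x², y², …, xⁿ, yⁿ}, and hence rank M(n) ≤ 2n+1. -/

import Mathlib

open MeasureTheory Matrix

/-- Index set for the moment matrix `M(n)`: monomials `yⁱxʲ` with `i + j ≤ n`,
encoded as pairs `(i, j)`. -/
abbrev MIdx (n : ℕ) := {v : Fin (n + 1) × Fin (n + 1) // (v.1 : ℕ) + (v.2 : ℕ) ≤ n}

/-- The moment matrix `M(n)(β)`: entry in row `yⁱxʲ`, column `yᵏxˡ` is `β_{i+k, j+l}`. -/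
def momentMat (n : ℕ) (β : ℕ → ℕ → ℝ) : Matrix (MIdx n) (MIdx n) ℝ :=
  Matrix.of fun u v => β ((u.1.1 : ℕ) + (v.1.1 : ℕ)) ((u.1.2 : ℕ) + (v.1.2 : ℕ))

/-- The coefficient vector `p̂` of a two-variable polynomial (convention: `X 0 = x`,
`X 1 = y`; the coordinate of `p̂` at `(i, j)` is the coefficient of `yⁱxʲ`). -/
noncomputable def coeffVec (n : ℕ) (p : MvPolynomial (Fin 2) ℝ) : MIdx n → ℝ :=
  fun v => MvPolynomial.coeff
    (Finsupp.single (0 : Fin 2) ((v.1.2 : ℕ)) + Finsupp.single (1 : Fin 2) ((v.1.1 : ℕ))) p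

/-- `M(n)` is recursively generated: if `p, q, pq` have degree at most `n` and
`p(X,Y) = 0` in the column space, then `(pq)(X,Y) = 0`. -/
def RecursivelyGenerated (n : ℕ) (M : Matrix (MIdx n) (MIdx n) ℝ) : Prop :=
  ∀ p q : MvPolynomial (Fin 2) ℝ, p.totalDegree ≤ n → q.totalDegree ≤ n →
    (p * q).totalDegree ≤ n → M.mulVec (coeffVec n p) = 0 →
      M.mulVec (coeffVec n (p * q)) = 0

/-- The variety `V(M(n))`: common zero set of all polynomials of degree ≤ n whose
coefficient vector is annihilated by `M(n)`. -/
def varietyOf (n : ℕ) (M : Matrix (MIdx n) (MIdx n) ℝ) : Set (ℝ × ℝ) :=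
  {w | ∀ p : MvPolynomial (Fin 2) ℝ, p.totalDegree ≤ n →
    M.mulVec (coeffVec n p) = 0 → MvPolynomial.eval ![w.1, w.2] p = 0}

/-- The Riesz functional `L_β` of a truncated moment sequence. -/
def riesz (β : ℕ → ℕ → ℝ) (p : MvPolynomial (Fin 2) ℝ) : ℝ :=
  ∑ v ∈ p.support, p.coeff v * β (v 1) (v 0)

/-- The (closed) support of a Borel measure on `ℝ²`: points all of whose open
neighborhoods have positive measure. -/
def msupport (μ : Measure (ℝ × ℝ)) : Set (ℝ × ℝ) :=
  {w | ∀ U : Set (ℝ × ℝ), IsOpen U → w ∈ U → μ U ≠ 0}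

/-- `μ` is a representing measure for `β^{(2n)}`. -/
def IsRepMeasure (n : ℕ) (β : ℕ → ℕ → ℝ) (μ : Measure (ℝ × ℝ)) : Prop :=
  ∀ i j : ℕ, i + j ≤ 2 * n →
    Integrable (fun w : ℝ × ℝ => w.2 ^ i * w.1 ^ j) μ ∧
      β i j = ∫ w : ℝ × ℝ, w.2 ^ i * w.1 ^ j ∂μ


open MvPolynomial in
private lemma monomial_eq_aux (a b : ℕ) :
    (X 1 ^ a * X 0 ^ b : MvPolynomial (Fin 2) ℝ) =
      monomial (Finsupp.single 1 a + Finsupp.single 0 b) 1 := by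
  rw [X_pow_eq_monomial, X_pow_eq_monomial, monomial_mul, one_mul]

private lemma single_eq_iff (a b c d : ℕ) :
    (Finsupp.single (1 : Fin 2) a + Finsupp.single (0 : Fin 2) b
      = Finsupp.single (0 : Fin 2) c + Finsupp.single (1 : Fin 2) d)
      ↔ (a = d ∧ b = c) := by
  constructor
  · intro h
    refine ⟨?_, ?_⟩
    · have := DFunLike.congr_fun h 1
      simpa [Finsupp.single_apply] using this
    · have := DFunLike.congr_fun h 0
      simpa [Finsupp.single_apply] using this
  · rintro ⟨rfl, rfl⟩
    exact add_comm _ _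

open MvPolynomial in
private lemma deg_aux (a b : ℕ) :
    (X 1 ^ a * X 0 ^ b : MvPolynomial (Fin 2) ℝ).totalDegree = a + b := by
  rw [monomial_eq_aux, totalDegree_monomial _ one_ne_zero]
  simp [Finsupp.sum_add_index, Finsupp.sum_single_index]

open MvPolynomial in
private lemma coeffVec_monomial (n : ℕ) (u : MIdx n) :
    coeffVec n (X 1 ^ ((u.1.1 : ℕ)) * X 0 ^ ((u.1.2 : ℕ))) =
      fun v => if v = u then 1 else 0 := by
  funext v
  simp only [coeffVec, monomial_eq_aux, coeff_monomial]
  have hiff : (Finsupp.single (1 : Fin 2) ((u.1.1 : ℕ)) + Finsupp.single 0 ((u.1.2 : ℕ))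
      = Finsupp.single (0 : Fin 2) ((v.1.2 : ℕ)) + Finsupp.single 1 ((v.1.1 : ℕ))) ↔ v = u := by
    rw [single_eq_iff]
    constructor
    · rintro ⟨h1, h2⟩
      exact Subtype.ext (Prod.ext (Fin.ext h1.symm) (Fin.ext h2.symm))
    · rintro rfl; exact ⟨rfl, rfl⟩
  simp [hiff]

private lemma col_zero (n : ℕ) (hn : 2 ≤ n) (β : ℕ → ℕ → ℝ)
    (hrg : RecursivelyGenerated n (momentMat n β))
    (hyx : (momentMat n β).mulVec
      (coeffVec n (MvPolynomial.X 1 * MvPolynomial.X 0)) = 0)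
    (u : MIdx n) (hi : (u.1.1 : ℕ) ≠ 0) (hj : (u.1.2 : ℕ) ≠ 0) :
    ∀ r : MIdx n, momentMat n β r u = 0 := by
  obtain ⟨a, ha⟩ := Nat.exists_eq_succ_of_ne_zero hi
  obtain ⟨b, hb⟩ := Nat.exists_eq_succ_of_ne_zero hj
  have hun : (u.1.1 : ℕ) + (u.1.2 : ℕ) ≤ n := u.2
  have hpq : (MvPolynomial.X 1 * MvPolynomial.X 0 : MvPolynomial (Fin 2) ℝ)
      * (MvPolynomial.X 1 ^ a * MvPolynomial.X 0 ^ b)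
      = MvPolynomial.X 1 ^ ((u.1.1 : ℕ)) * MvPolynomial.X 0 ^ ((u.1.2 : ℕ)) := by
    rw [ha, hb, Nat.succ_eq_add_one, Nat.succ_eq_add_one]; ring
  have h0 := hrg (MvPolynomial.X 1 * MvPolynomial.X 0)
      (MvPolynomial.X 1 ^ a * MvPolynomial.X 0 ^ b)
      (by
        have : (MvPolynomial.X 1 * MvPolynomial.X 0 : MvPolynomial (Fin 2) ℝ)
            = MvPolynomial.X 1 ^ 1 * MvPolynomial.X 0 ^ 1 := by ring
        rw [this, deg_aux]; omega)
      (by rw [deg_aux]; omega)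
      (by rw [hpq, deg_aux]; omega) hyx
  rw [hpq, coeffVec_monomial] at h0
  intro r
  have := congrFun h0 r
  simpa [Matrix.mulVec, dotProduct, mul_ite] using this

private def pureIdx (n : ℕ) (k : Fin (2 * n + 1)) : MIdx n :=
  if h : (k : ℕ) ≤ n then ⟨(⟨0, Nat.succ_pos n⟩, ⟨k, by omega⟩), by simpa using h⟩
  else ⟨(⟨(k : ℕ) - n, by omega⟩, ⟨0, Nat.succ_pos n⟩), by simp; omega⟩

private lemma exists_pureIdx (n : ℕ) (u : MIdx n)
    (h : (u.1.1 : ℕ) = 0 ∨ (u.1.2 : ℕ) = 0) : ∃ k, pureIdx n k = u := by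
  have hun : (u.1.1 : ℕ) + (u.1.2 : ℕ) ≤ n := u.2
  by_cases h1 : (u.1.1 : ℕ) = 0
  · refine ⟨⟨(u.1.2 : ℕ), by omega⟩, ?_⟩
    rw [pureIdx, dif_pos (by simpa using (by omega : ((u.1.2 : ℕ)) ≤ n))]
    exact Subtype.ext (Prod.ext (Fin.ext (by simpa using h1.symm)) (Fin.ext rfl))
  · have h2 : (u.1.2 : ℕ) = 0 := h.resolve_left h1
    refine ⟨⟨n + (u.1.1 : ℕ), by omega⟩, ?_⟩
    rw [pureIdx, dif_neg (show ¬ (((⟨n + (u.1.1 : ℕ), by omega⟩ : Fin (2 * n + 1)) : ℕ) ≤ n) by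
      show ¬ (n + (u.1.1 : ℕ) ≤ n); omega)]
    exact Subtype.ext (Prod.ext (Fin.ext (by simp)) (Fin.ext (by simpa using h2.symm)))


/-- If `M(n)` is positive semidefinite, recursively generated, and satisfies the
column relation `YX = 0`, then every nonzero column of `M(n)` equals a column
indexed by a pure power `xᵏ` or `yᵏ`; hence `rank M(n) ≤ 2n + 1`. -/
theorem columns_eq_purePower_of_yx_eq_zero (n : ℕ) (hn : 2 ≤ n) (β : ℕ → ℕ → ℝ)
    (hpsd : (momentMat n β).PosSemidef)
    (hrg : RecursivelyGenerated n (momentMat n β))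
    (hyx : (momentMat n β).mulVec
      (coeffVec n (MvPolynomial.X 1 * MvPolynomial.X 0)) = 0) :
    (∀ u : MIdx n, (fun r : MIdx n => momentMat n β r u) ≠ 0 →
        ∃ v : MIdx n, ((v.1.1 : ℕ) = 0 ∨ (v.1.2 : ℕ) = 0) ∧
          ∀ r : MIdx n, momentMat n β r u = momentMat n β r v) ∧
      (momentMat n β).rank ≤ 2 * n + 1 := by
  constructor
  · intro u hu
    by_cases h1 : (u.1.1 : ℕ) = 0 ∨ (u.1.2 : ℕ) = 0
    · exact ⟨u, h1, fun r => rfl⟩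
    · push_neg at h1
      exact absurd (funext (col_zero n hn β hrg hyx u h1.1 h1.2)) hu
  · rw [Matrix.rank_eq_finrank_span_cols]
    have hle : Submodule.span ℝ (Set.range (momentMat n β)ᵀ) ≤
        Submodule.span ℝ (Set.range fun k : Fin (2 * n + 1) =>
          (momentMat n β)ᵀ (pureIdx n k)) := by
      rw [Submodule.span_le]
      rintro _ ⟨u, rfl⟩
      by_cases h1 : (u.1.1 : ℕ) = 0 ∨ (u.1.2 : ℕ) = 0
      · obtain ⟨k, hk⟩ := exists_pureIdx n u h1
        exact Submodule.subset_span ⟨k, show (momentMat n β)ᵀ (pureIdx n k) = _ by rw [hk]⟩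
      · push_neg at h1
        have hz : (momentMat n β)ᵀ u = 0 :=
          funext fun r => col_zero n hn β hrg hyx u h1.1 h1.2 r
        rw [hz]
        exact Submodule.zero_mem _
    calc Module.finrank ℝ (Submodule.span ℝ (Set.range (momentMat n β)ᵀ))
        ≤ Module.finrank ℝ (Submodule.span ℝ (Set.range fun k : Fin (2 * n + 1) =>
            (momentMat n β)ᵀ (pureIdx n k))) := Submodule.finrank_mono hle
      _ ≤ Fintype.card (Fin (2 * n + 1)) := finrank_range_le_card _
      _ = 2 * n + 1 := Fintype.card_fin _
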